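/- For every z ∈ ℂ∖(−∞,0] such that sin(nπz − βπ/2) ≠ 0 and B(z) ≠ 0, the following identities hold: Δ₊(z)∇₊(z) = e^{2iθ(z)} and Δ₋(z)∇₋(z) = e^{−2iθ(z)}; ∇₋(z) − ∇₊(z) = −C z^{β−1} e^{−n v(z)} W(z) B(z)²; and Δ₋(z) − Δ₊(z) = 4 sin²θ(z) / (C z^{β−1} e^{−n v(z)} W(z) B(z)²), where θ(z) := nπz − βπ/2, v(z) := −z log c, C := 2iπ c^{−β/2} n^{β}, and W(z) := (nz)^{1−β} Γ(nz + β/2)/Γ(nz + 1 − β/2), with z^{β−1} and (nz)^{1−β} taken as principal powers. -/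

import Mathlib

open Complex Finset Filter Topology

/-- The weight `w(x) := Γ(x+β) cˣ / Γ(x+1)`. -/
noncomputable def weight (β c : ℝ) (s : ℂ) : ℂ :=
  Complex.Gamma (s + (β : ℂ)) * (c : ℂ) ^ s / Complex.Gamma (s + 1)

/-- The node `X_k := (k + β/2)/n`. -/
noncomputable def node (β : ℝ) (n : ℕ) (k : ℕ) : ℂ := ((k : ℂ) + (β : ℂ) / 2) / (n : ℂ)

/-- `B(z) := ∏_{j=0}^{n−1} (z − X_j)`. -/
noncomputable def Bprod (β : ℝ) (n : ℕ) (z : ℂ) : ℂ := ∏ j ∈ Finset.range n, (z - node β n j)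

/-- `∇_±(z) := nπ w(nz−β/2) B(z)² / (e^{∓iπ(nz−β/2)} sin(nπz − βπ/2))`; the sign `σ = ±1`
selects `∇_+` resp. `∇_−`. -/
noncomputable def nablaPM (β c : ℝ) (n : ℕ) (σ : ℤ) (z : ℂ) : ℂ :=
  (n : ℂ) * (Real.pi : ℂ) * weight β c ((n : ℂ) * z - (β : ℂ) / 2) * (Bprod β n z) ^ 2 /
    (Complex.exp (-(σ : ℂ) * Complex.I * (Real.pi : ℂ) * ((n : ℂ) * z - (β : ℂ) / 2)) *
      Complex.sin ((n : ℂ) * (Real.pi : ℂ) * z - (β : ℂ) * (Real.pi : ℂ) / 2))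

/-- `Δ_±(z) := e^{±iπ(nz−β/2)} sin(nπz − βπ/2) / (nπ w(nz−β/2) B(z)²)`; the sign `σ = ±1`
selects `Δ_+` resp. `Δ_−`. -/
noncomputable def deltaPM (β c : ℝ) (n : ℕ) (σ : ℤ) (z : ℂ) : ℂ :=
  Complex.exp ((σ : ℂ) * Complex.I * (Real.pi : ℂ) * ((n : ℂ) * z - (β : ℂ) / 2)) *
    Complex.sin ((n : ℂ) * (Real.pi : ℂ) * z - (β : ℂ) * (Real.pi : ℂ) / 2) /
    ((n : ℂ) * (Real.pi : ℂ) * weight β c ((n : ℂ) * z - (β : ℂ) / 2) * (Bprod β n z) ^ 2)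

/-- `θ(z) := nπz − βπ/2`. -/
noncomputable def theta (β : ℝ) (n : ℕ) (z : ℂ) : ℂ :=
  (n : ℂ) * (Real.pi : ℂ) * z - (β : ℂ) * (Real.pi : ℂ) / 2

/-- `v(z) := −z log c`. -/
noncomputable def vfun (c : ℝ) (z : ℂ) : ℂ := -z * (Real.log c : ℂ)

/-- `C := 2iπ c^{−β/2} n^{β}`. -/
noncomputable def Cconst (β c : ℝ) (n : ℕ) : ℂ :=
  2 * Complex.I * (Real.pi : ℂ) * (c : ℂ) ^ (-(β : ℂ) / 2) * (n : ℂ) ^ (β : ℂ)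

/-- `W(z) := (nz)^{1−β} Γ(nz + β/2)/Γ(nz + 1 − β/2)`. -/
noncomputable def Wfun (β : ℝ) (n : ℕ) (z : ℂ) : ℂ :=
  ((n : ℂ) * z) ^ (1 - (β : ℂ)) * Complex.Gamma ((n : ℂ) * z + (β : ℂ) / 2) /
    Complex.Gamma ((n : ℂ) * z + 1 - (β : ℂ) / 2)

lemma aux_mul_cpow {r : ℝ} (hr : 0 < r) {z : ℂ} (hz : z ≠ 0) (w : ℂ) :
    ((r : ℂ) * z) ^ w = (r : ℂ) ^ w * z ^ w := by
  have hr0 : (r : ℂ) ≠ 0 := by exact_mod_cast hr.ne'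
  rw [Complex.cpow_def_of_ne_zero (mul_ne_zero hr0 hz),
      Complex.cpow_def_of_ne_zero hr0, Complex.cpow_def_of_ne_zero hz,
      Complex.log_ofReal_mul hr hz, ← Complex.exp_add, ← Complex.ofReal_log hr.le]
  congr 1
  ring

lemma aux_exp_sub_exp (t : ℂ) :
    Complex.exp (-(Complex.I * t)) - Complex.exp (Complex.I * t) =
      -2 * Complex.I * Complex.sin t := by
  rw [Complex.sin, mul_comm Complex.I t]
  ring_nf
  rw [Complex.I_sq]
  ring

/-- The identities (2.22)–(2.24) for `∇_±` and `Δ_±`. -/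
theorem nabla_delta_identities (c β : ℝ) (hc0 : 0 < c) (hc1 : c < 1)
    (hβ1 : 1 ≤ β) (hβ2 : β < 2) (n : ℕ) (hn : 1 ≤ n) (z : ℂ)
    (hz : ¬(z.im = 0 ∧ z.re ≤ 0))
    (hsin : Complex.sin ((n : ℂ) * (Real.pi : ℂ) * z - (β : ℂ) * (Real.pi : ℂ) / 2) ≠ 0)
    (hB : Bprod β n z ≠ 0) :
    deltaPM β c n 1 z * nablaPM β c n 1 z = Complex.exp (2 * Complex.I * theta β n z) ∧
    deltaPM β c n (-1) z * nablaPM β c n (-1) z = Complex.exp (-(2 * Complex.I * theta β n z)) ∧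
    nablaPM β c n (-1) z - nablaPM β c n 1 z =
      -(Cconst β c n * z ^ ((β : ℂ) - 1) * Complex.exp (-(n : ℂ) * vfun c z) * Wfun β n z *
        (Bprod β n z) ^ 2) ∧
    deltaPM β c n (-1) z - deltaPM β c n 1 z =
      4 * (Complex.sin (theta β n z)) ^ 2 /
        (Cconst β c n * z ^ ((β : ℂ) - 1) * Complex.exp (-(n : ℂ) * vfun c z) * Wfun β n z *
          (Bprod β n z) ^ 2) := by
  have hπ : (Real.pi : ℂ) ≠ 0 := by exact_mod_cast Real.pi_ne_zero
  have hn0 : (n : ℂ) ≠ 0 := by exact_mod_cast Nat.pos_of_ne_zero (by omega) |>.ne'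
  have hz0 : z ≠ 0 := by
    rintro rfl
    exact hz ⟨rfl, le_refl 0⟩
  have hc : (c : ℂ) ≠ 0 := by exact_mod_cast hc0.ne'
  have hcase : z.im ≠ 0 ∨ 0 < z.re := by
    rcases eq_or_ne z.im 0 with h | h
    · right; by_contra h'; exact hz ⟨h, le_of_not_gt h'⟩
    · left; exact h
  have hGamma : ∀ s : ℂ, s.im ≠ 0 ∨ 0 < s.re → Complex.Gamma s ≠ 0 := by
    intro s hs
    apply Complex.Gamma_ne_zero
    intro m hsm
    rcases hs with h | h
    · apply h; rw [hsm]; simp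
    · rw [hsm] at h
      simp only [Complex.neg_re, Complex.natCast_re] at h
      have : (0 : ℝ) ≤ (m : ℝ) := Nat.cast_nonneg m
      linarith
  have hnR : (0 : ℝ) < n := by exact_mod_cast Nat.pos_of_ne_zero (by omega)
  have hΓ1 : Complex.Gamma ((n : ℂ) * z + (β : ℂ) / 2) ≠ 0 := by
    apply hGamma
    rcases hcase with h | h
    · left; simp
      exact ⟨by omega, h⟩
    · right; simp
      nlinarith [mul_pos hnR h]
  have hΓ2 : Complex.Gamma ((n : ℂ) * z + 1 - (β : ℂ) / 2) ≠ 0 := by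
    apply hGamma
    rcases hcase with h | h
    · left; simp
      exact ⟨by omega, h⟩
    · right; simp
      nlinarith [mul_pos hnR h]
  have hcpow : (c : ℂ) ^ ((n : ℂ) * z - (β : ℂ) / 2) ≠ 0 := by
    rw [Complex.cpow_def_of_ne_zero hc]
    exact Complex.exp_ne_zero _
  have hw : weight β c ((n : ℂ) * z - (β : ℂ) / 2) ≠ 0 := by
    unfold weight
    rw [show (n : ℂ) * z - (β : ℂ) / 2 + (β : ℂ) = (n : ℂ) * z + (β : ℂ) / 2 by ring,
        show (n : ℂ) * z - (β : ℂ) / 2 + 1 = (n : ℂ) * z + 1 - (β : ℂ) / 2 by ring]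
    exact div_ne_zero (mul_ne_zero hΓ1 hcpow) hΓ2
  -- the key scalar identity
  have h1 : ((n : ℂ) * z) ^ (1 - (β : ℂ)) = (n : ℂ) ^ (1 - (β : ℂ)) * z ^ (1 - (β : ℂ)) := by
    have := aux_mul_cpow hnR hz0 (1 - (β : ℂ))
    simpa using this
  have h2 : (c : ℂ) ^ ((n : ℂ) * z - (β : ℂ) / 2) =
      (c : ℂ) ^ (-(β : ℂ) / 2) * Complex.exp (-(n : ℂ) * vfun c z) := by
    rw [show (n : ℂ) * z - (β : ℂ) / 2 = -(β : ℂ) / 2 + (n : ℂ) * z by ring,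
        Complex.cpow_add _ _ hc]
    congr 1
    rw [Complex.cpow_def_of_ne_zero hc, ← Complex.ofReal_log hc0.le]
    unfold vfun
    congr 1
    ring
  have h3 : (n : ℂ) ^ ((β : ℂ)) * (n : ℂ) ^ (1 - (β : ℂ)) = (n : ℂ) := by
    rw [← Complex.cpow_add _ _ hn0, show (β : ℂ) + (1 - (β : ℂ)) = 1 by ring,
        Complex.cpow_one]
  have h4 : z ^ ((β : ℂ) - 1) * z ^ (1 - (β : ℂ)) = 1 := by
    rw [← Complex.cpow_add _ _ hz0, show (β : ℂ) - 1 + (1 - (β : ℂ)) = 0 by ring,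
        Complex.cpow_zero]
  have key : Cconst β c n * z ^ ((β : ℂ) - 1) * Complex.exp (-(n : ℂ) * vfun c z) *
      Wfun β n z =
      2 * Complex.I * (Real.pi : ℂ) * (n : ℂ) *
        weight β c ((n : ℂ) * z - (β : ℂ) / 2) := by
    unfold Cconst Wfun weight
    rw [show (n : ℂ) * z - (β : ℂ) / 2 + (β : ℂ) = (n : ℂ) * z + (β : ℂ) / 2 by ring,
        show (n : ℂ) * z - (β : ℂ) / 2 + 1 = (n : ℂ) * z + 1 - (β : ℂ) / 2 by ring,
        h1, h2]
    have h5 : (n : ℂ) ^ ((β : ℂ)) * (n : ℂ) ^ (1 - (β : ℂ)) *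
        (z ^ ((β : ℂ) - 1) * z ^ (1 - (β : ℂ))) = (n : ℂ) := by
      rw [h4, mul_one, h3]
    set Γa := Complex.Gamma ((n : ℂ) * z + (β : ℂ) / 2) with hΓa
    set Γb := Complex.Gamma ((n : ℂ) * z + 1 - (β : ℂ) / 2) with hΓb
    set cp := (c : ℂ) ^ (-(β : ℂ) / 2) with hcp
    set E := Complex.exp (-(n : ℂ) * vfun c z) with hE
    set na := (n : ℂ) ^ ((β : ℂ)) with hna
    set nb := (n : ℂ) ^ (1 - (β : ℂ)) with hnb
    set za := z ^ ((β : ℂ) - 1) with hza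
    set zb := z ^ (1 - (β : ℂ)) with hzb
    rw [hΓb] at hΓ2
    field_simp
    linear_combination (cp * E * Γb⁻¹) * h5
  have hexp : ∀ t : ℂ, Complex.exp t ≠ 0 := Complex.exp_ne_zero
  have hEF : Complex.exp (Complex.I * ((n : ℂ) * (Real.pi : ℂ) * z - (β : ℂ) * (Real.pi : ℂ) / 2)) *
      Complex.exp (-(Complex.I * ((n : ℂ) * (Real.pi : ℂ) * z - (β : ℂ) * (Real.pi : ℂ) / 2))) = 1 := by
    rw [← Complex.exp_add, add_neg_cancel, Complex.exp_zero]
  have hFE := aux_exp_sub_exp ((n : ℂ) * (Real.pi : ℂ) * z - (β : ℂ) * (Real.pi : ℂ) / 2)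
  have e1 : -(((1 : ℤ)) : ℂ) * Complex.I * (Real.pi : ℂ) * ((n : ℂ) * z - (β : ℂ) / 2) =
      -(Complex.I * ((n : ℂ) * (Real.pi : ℂ) * z - (β : ℂ) * (Real.pi : ℂ) / 2)) := by
    push_cast; ring
  have e2 : (((1 : ℤ)) : ℂ) * Complex.I * (Real.pi : ℂ) * ((n : ℂ) * z - (β : ℂ) / 2) =
      Complex.I * ((n : ℂ) * (Real.pi : ℂ) * z - (β : ℂ) * (Real.pi : ℂ) / 2) := by
    push_cast; ring
  have e3 : -(((-1 : ℤ)) : ℂ) * Complex.I * (Real.pi : ℂ) * ((n : ℂ) * z - (β : ℂ) / 2) =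
      Complex.I * ((n : ℂ) * (Real.pi : ℂ) * z - (β : ℂ) * (Real.pi : ℂ) / 2) := by
    push_cast; ring
  have e4 : (((-1 : ℤ)) : ℂ) * Complex.I * (Real.pi : ℂ) * ((n : ℂ) * z - (β : ℂ) / 2) =
      -(Complex.I * ((n : ℂ) * (Real.pi : ℂ) * z - (β : ℂ) * (Real.pi : ℂ) / 2)) := by
    push_cast; ring
  rw [show Cconst β c n * z ^ ((β : ℂ) - 1) * Complex.exp (-(n : ℂ) * vfun c z) * Wfun β n z *
        (Bprod β n z) ^ 2 = (2 * Complex.I * (Real.pi : ℂ) * (n : ℂ) *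
          weight β c ((n : ℂ) * z - (β : ℂ) / 2)) * (Bprod β n z) ^ 2 by rw [key]]
  unfold deltaPM nablaPM theta
  rw [e1, e2, e3, e4,
    show (2 : ℂ) * Complex.I * ((n : ℂ) * (Real.pi : ℂ) * z - (β : ℂ) * (Real.pi : ℂ) / 2) =
      Complex.I * ((n : ℂ) * (Real.pi : ℂ) * z - (β : ℂ) * (Real.pi : ℂ) / 2) +
      Complex.I * ((n : ℂ) * (Real.pi : ℂ) * z - (β : ℂ) * (Real.pi : ℂ) / 2) by ring,
    neg_add, Complex.exp_add, Complex.exp_add]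
  set W := weight β c ((n : ℂ) * z - (β : ℂ) / 2) with hWdef
  set Bz := Bprod β n z with hBzdef
  set S := Complex.sin ((n : ℂ) * (Real.pi : ℂ) * z - (β : ℂ) * (Real.pi : ℂ) / 2) with hSdef
  set E := Complex.exp (Complex.I * ((n : ℂ) * (Real.pi : ℂ) * z - (β : ℂ) * (Real.pi : ℂ) / 2))
    with hEdef
  set F := Complex.exp (-(Complex.I * ((n : ℂ) * (Real.pi : ℂ) * z - (β : ℂ) * (Real.pi : ℂ) / 2)))
    with hFdef
  have hE0 : E ≠ 0 := hexp _
  have hF0 : F ≠ 0 := hexp _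
  have hD : (n : ℂ) * (Real.pi : ℂ) * W * Bz ^ 2 ≠ 0 :=
    mul_ne_zero (mul_ne_zero (mul_ne_zero hn0 hπ) hw) (pow_ne_zero 2 hB)
  have hD2 : 2 * Complex.I * (Real.pi : ℂ) * (n : ℂ) * W * Bz ^ 2 ≠ 0 :=
    mul_ne_zero (mul_ne_zero (mul_ne_zero (mul_ne_zero
      (mul_ne_zero two_ne_zero Complex.I_ne_zero) hπ) hn0) hw) (pow_ne_zero 2 hB)
  refine ⟨?_, ?_, ?_, ?_⟩
  · rw [div_mul_div_comm, div_eq_iff (mul_ne_zero hD (mul_ne_zero hF0 hsin))]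
    linear_combination (-(E * ((n : ℂ) * (Real.pi : ℂ) * W * Bz ^ 2) * S)) * hEF
  · rw [div_mul_div_comm, div_eq_iff (mul_ne_zero hD (mul_ne_zero hE0 hsin))]
    linear_combination (-(F * ((n : ℂ) * (Real.pi : ℂ) * W * Bz ^ 2) * S)) * hEF
  · rw [div_sub_div _ _ (mul_ne_zero hE0 hsin) (mul_ne_zero hF0 hsin),
      div_eq_iff (mul_ne_zero (mul_ne_zero hE0 hsin) (mul_ne_zero hF0 hsin))]
    linear_combination (((n : ℂ) * (Real.pi : ℂ) * W * Bz ^ 2) * S) * hFE +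
      (2 * Complex.I * ((n : ℂ) * (Real.pi : ℂ) * W * Bz ^ 2) * S ^ 2) * hEF
  · rw [div_sub_div_same, div_eq_div_iff hD hD2]
    linear_combination (2 * Complex.I * ((n : ℂ) * (Real.pi : ℂ) * W * Bz ^ 2) * S) * hFE +
      (-(4 * ((n : ℂ) * (Real.pi : ℂ) * W * Bz ^ 2) * S ^ 2)) * Complex.I_mul_I
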